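/- Let J : ℝⁿ → ℝ be continuous, nonnegative, symmetric (J(y) = J(-y)), with J(y) ≥ A > 0 on some ball B(0, r₁). Then there exist constants K₁, K₂ > 0 such that for every p ∈ ℝⁿ, ∫ J(y)·exp(-y·p) dy ≥ K₁·exp(K₂·|p|). -/

import Mathlib

open MeasureTheory Real Set Filter Metric
open scoped RealInnerProductSpace Topology

theorem stmt2 (n : ℕ) (J : EuclideanSpace ℝ (Fin n) → ℝ)
    (hJc : Continuous J) (hJnn : ∀ y, 0 ≤ J y)
    (hJsymm : ∀ y, J (-y) = J y)
    (hJsupp : HasCompactSupport J)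
    (A r₁ : ℝ) (hA : 0 < A) (hr₁ : 0 < r₁)
    (hJA : ∀ y, ‖y‖ < r₁ → A ≤ J y) :
    ∃ K₁ > (0:ℝ), ∃ K₂ > (0:ℝ), ∀ p : EuclideanSpace ℝ (Fin n),
      K₁ * Real.exp (K₂ * ‖p‖) ≤ ∫ y, J y * Real.exp (-⟪y, p⟫) := by
  set V : ℝ := (volume (ball (0:EuclideanSpace ℝ (Fin n)) (r₁/8))).toReal with hV
  have hVpos : 0 < V := by
    refine ENNReal.toReal_pos ?_ measure_ball_lt_top.ne
    exact (measure_ball_pos _ _ (by positivity)).ne'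
  refine ⟨A * V, by positivity, r₁/2, by positivity, fun p => ?_⟩
  set u : EuclideanSpace ℝ (Fin n) := ‖p‖⁻¹ • p with hu
  set c₀ : EuclideanSpace ℝ (Fin n) := (-(3*r₁/4)) • u with hc
  set S : Set (EuclideanSpace ℝ (Fin n)) := ball c₀ (r₁/8) with hS
  have hup : ⟪u, p⟫ = ‖p‖ := by
    rw [hu, real_inner_smul_left, real_inner_self_eq_norm_sq]
    rcases eq_or_ne p 0 with h | h
    · simp [h]
    · have : ‖p‖ ≠ 0 := norm_ne_zero_iff.mpr h
      field_simp
  have hun : ‖u‖ ≤ 1 := by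
    rw [hu, norm_smul, norm_inv, norm_norm]
    rcases eq_or_ne p 0 with h | h
    · simp [h]
    · rw [inv_mul_cancel₀ (norm_ne_zero_iff.mpr h)]
  have hpnn : (0:ℝ) ≤ ‖p‖ := norm_nonneg _
  have key : ∀ y ∈ S, ⟪y, p⟫ ≤ -(r₁/2 * ‖p‖) ∧ ‖y‖ < r₁ := by
    intro y hy
    have hdist : ‖y - c₀‖ < r₁/8 := by
      rw [hS, mem_ball, dist_eq_norm] at hy; exact hy
    have h1 : ⟪c₀, p⟫ = -(3*r₁/4) * ‖p‖ := by
      rw [hc, real_inner_smul_left, hup]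
    have h2 : ⟪y - c₀, p⟫ ≤ (r₁/8) * ‖p‖ := by
      calc ⟪y - c₀, p⟫ ≤ ‖y - c₀‖ * ‖p‖ := real_inner_le_norm _ _
        _ ≤ (r₁/8) * ‖p‖ := by
            apply mul_le_mul_of_nonneg_right hdist.le hpnn
    have hyip : ⟪y, p⟫ ≤ -(r₁/2 * ‖p‖) := by
      have : ⟪y, p⟫ = ⟪c₀, p⟫ + ⟪y - c₀, p⟫ := by
        rw [inner_sub_left]; ring
      rw [this, h1]
      nlinarith
    refine ⟨hyip, ?_⟩
    have hc₀ : ‖c₀‖ ≤ 3*r₁/4 := by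
      rw [hc, norm_smul]
      have : ‖(-(3*r₁/4) : ℝ)‖ = 3*r₁/4 := by
        rw [Real.norm_eq_abs, abs_neg, abs_of_nonneg (by positivity)]
      rw [this]
      nlinarith
    calc ‖y‖ ≤ ‖y - c₀‖ + ‖c₀‖ := by
            have := norm_add_le (y - c₀) c₀; simpa using this
      _ < r₁/8 + 3*r₁/4 := by linarith
      _ < r₁ := by linarith
  set f : EuclideanSpace ℝ (Fin n) → ℝ := fun y => J y * Real.exp (-⟪y, p⟫) with hf
  have hfc : Continuous f := by
    apply hJc.mul
    exact (Continuous.inner continuous_id continuous_const).neg.rexp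
  have hfcs : HasCompactSupport f := hJsupp.mul_right
  have hfint : Integrable f := hfc.integrable_of_hasCompactSupport hfcs
  have hfnn : ∀ y, 0 ≤ f y := fun y => mul_nonneg (hJnn y) (Real.exp_nonneg _)
  have hvolS : (volume S).toReal = V := by
    rw [hS, hV, Measure.addHaar_ball_center]
  have hvolSfin : volume S ≠ ⊤ := measure_ball_lt_top.ne
  have step1 : A * V * Real.exp (r₁/2 * ‖p‖)
      = ∫ _ in S, A * Real.exp (r₁/2 * ‖p‖) := by
    rw [setIntegral_const, measureReal_def, hvolS, smul_eq_mul]; ring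
  have step2 : ∫ _ in S, A * Real.exp (r₁/2 * ‖p‖) ≤ ∫ y in S, f y := by
    apply setIntegral_mono_on
    · exact integrableOn_const hvolSfin
    · exact hfint.integrableOn
    · exact measurableSet_ball
    · intro y hy
      obtain ⟨h1, h2⟩ := key y hy
      have : Real.exp (r₁/2 * ‖p‖) ≤ Real.exp (-⟪y, p⟫) := by
        apply Real.exp_le_exp.mpr; linarith
      exact mul_le_mul (hJA y h2) this (Real.exp_nonneg _) (hJnn y)
  have step3 : ∫ y in S, f y ≤ ∫ y, f y :=
    setIntegral_le_integral hfint (Filter.Eventually.of_forall hfnn)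
  calc A * V * Real.exp (r₁/2 * ‖p‖) = ∫ _ in S, A * Real.exp (r₁/2 * ‖p‖) := step1
    _ ≤ ∫ y in S, f y := step2
    _ ≤ ∫ y, f y := step3
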